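/- For every integer n ≥ 0, ∫₀^∞ xⁿ/(x+1) · e^{-x} dx = (-1)ⁿ (∑_{j=0}^{n-1} (-1)^{j+1} j! + δ), where δ = ∫₀^∞ ln(x+1) e^{-x} dx is the Euler–Gompertz constant. -/

import Mathlib

open MeasureTheory Real Filter Set

lemma intPow (n : ℕ) : IntegrableOn (fun x : ℝ => x ^ n * Real.exp (-x)) (Set.Ioi 0) := by
  have h := Real.GammaIntegral_convergent (s := (n : ℝ) + 1) (by positivity)
  refine h.congr_fun (fun x hx => ?_) measurableSet_Ioi
  beta_reduce
  rw [add_sub_cancel_right, Real.rpow_natCast, mul_comm]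

lemma valPow (n : ℕ) :
    ∫ x in Set.Ioi (0:ℝ), x ^ n * Real.exp (-x) = (Nat.factorial n : ℝ) := by
  have h := Real.Gamma_eq_integral (s := (n : ℝ) + 1) (by positivity)
  have h2 : Real.Gamma ((n : ℝ) + 1) = (Nat.factorial n : ℝ) := by
    exact_mod_cast Real.Gamma_nat_eq_factorial n
  rw [h2] at h
  rw [h]
  refine setIntegral_congr_fun measurableSet_Ioi (fun x hx => ?_)
  rw [add_sub_cancel_right, Real.rpow_natCast, mul_comm]

lemma intFrac (n : ℕ) :
    IntegrableOn (fun x : ℝ => x ^ n / (x + 1) * Real.exp (-x)) (Set.Ioi 0) := by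
  refine (intPow n).mono' ?_ ?_
  · refine (ContinuousOn.mul (ContinuousOn.div ?_ ?_ ?_) ?_).aestronglyMeasurable
      measurableSet_Ioi
    · exact (continuous_pow n).continuousOn
    · exact (continuous_id.add continuous_const).continuousOn
    · intro x hx; have : (0:ℝ) < x := hx; positivity
    · exact (Real.continuous_exp.comp continuous_neg).continuousOn
  · filter_upwards [ae_restrict_mem measurableSet_Ioi] with x hx
    have hx0 : (0:ℝ) < x := hx
    rw [Real.norm_eq_abs, abs_mul, abs_div, abs_of_nonneg (pow_nonneg hx0.le n),
      abs_of_pos (by positivity : (0:ℝ) < x + 1), abs_of_pos (Real.exp_pos _)]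
    gcongr
    exact div_le_self (pow_nonneg hx0.le n) (by linarith)

lemma intLog :
    IntegrableOn (fun x : ℝ => Real.log (x + 1) * Real.exp (-x)) (Set.Ioi 0) := by
  refine (intPow 1).mono' ?_ ?_
  · refine (ContinuousOn.mul ?_ ?_).aestronglyMeasurable measurableSet_Ioi
    · refine ContinuousOn.log (continuous_id.add continuous_const).continuousOn ?_
      intro x hx; have : (0:ℝ) < x := hx; positivity
    · exact (Real.continuous_exp.comp continuous_neg).continuousOn
  · filter_upwards [ae_restrict_mem measurableSet_Ioi] with x hx
    have hx0 : (0:ℝ) < x := hx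
    have hlog0 : 0 ≤ Real.log (x + 1) := Real.log_nonneg (by linarith)
    have hlogx : Real.log (x + 1) ≤ x := by
      have := Real.log_le_sub_one_of_pos (x := x + 1) (by linarith)
      linarith
    rw [Real.norm_eq_abs, abs_mul, abs_of_nonneg hlog0, abs_of_pos (Real.exp_pos _),
      pow_one]
    gcongr

lemma tendstoF :
    Tendsto (fun x : ℝ => -(Real.log (x + 1) * Real.exp (-x))) atTop (nhds 0) := by
  have h1 : Tendsto (fun x : ℝ => x ^ 1 * Real.exp (-x)) atTop (nhds 0) :=
    tendsto_pow_mul_exp_neg_atTop_nhds_zero 1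
  rw [← neg_zero]
  refine (tendsto_of_tendsto_of_tendsto_of_le_of_le' tendsto_const_nhds h1 ?_ ?_).neg
  · filter_upwards [eventually_ge_atTop (0:ℝ)] with x hx
    exact mul_nonneg (Real.log_nonneg (by linarith)) (Real.exp_pos _).le
  · filter_upwards [eventually_ge_atTop (0:ℝ)] with x hx
    have hlogx : Real.log (x + 1) ≤ x := by
      have := Real.log_le_sub_one_of_pos (x := x + 1) (by linarith)
      linarith
    rw [pow_one]
    gcongr

lemma base :
    ∫ x in Set.Ioi (0:ℝ), 1 / (x + 1) * Real.exp (-x) =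
      ∫ x in Set.Ioi (0:ℝ), Real.log (x + 1) * Real.exp (-x) := by
  have hfrac : IntegrableOn (fun x : ℝ => 1 / (x + 1) * Real.exp (-x)) (Set.Ioi 0) := by
    have := intFrac 0
    simpa using this
  have hderiv : ∀ x ∈ Set.Ici (0:ℝ),
      HasDerivAt (fun x : ℝ => -(Real.log (x + 1) * Real.exp (-x)))
        (Real.log (x + 1) * Real.exp (-x) - 1 / (x + 1) * Real.exp (-x)) x := by
    intro x hx
    have hx0 : (0:ℝ) ≤ x := hx
    have hne : x + 1 ≠ 0 := by positivity
    have hlog : HasDerivAt (fun x : ℝ => Real.log (x + 1)) (1 / (x + 1)) x := by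
      simpa using ((hasDerivAt_id x).add_const 1).log hne
    have hexp : HasDerivAt (fun x : ℝ => Real.exp (-x)) (-Real.exp (-x)) x := by
      simpa using ((hasDerivAt_id x).neg).exp
    have : HasDerivAt (fun x : ℝ => -(Real.log (x + 1) * Real.exp (-x)))
        (-(1 / (x + 1) * Real.exp (-x) + Real.log (x + 1) * -Real.exp (-x))) x :=
      (hlog.mul hexp).neg
    convert this using 1
    ring
  have key := integral_Ioi_of_hasDerivAt_of_tendsto' hderiv (intLog.sub hfrac) tendstoF
  simp only [Real.log_one, zero_mul, neg_zero, sub_zero, zero_add, neg_neg] at key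
  have := integral_sub intLog hfrac
  rw [this] at key
  linarith

theorem stmt0 (n : ℕ) :
    ∫ x in Set.Ioi (0:ℝ), x ^ n / (x + 1) * Real.exp (-x) =
      (-1 : ℝ) ^ n *
        ((∑ j ∈ Finset.range n, (-1 : ℝ) ^ (j + 1) * (Nat.factorial j : ℝ)) +
          ∫ x in Set.Ioi (0:ℝ), Real.log (x + 1) * Real.exp (-x)) := by
  induction n with
  | zero => simpa using base
  | succ n ih =>
    have hsplit : ∫ x in Set.Ioi (0:ℝ), x ^ (n + 1) / (x + 1) * Real.exp (-x) =
        (∫ x in Set.Ioi (0:ℝ), x ^ n * Real.exp (-x)) -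
          ∫ x in Set.Ioi (0:ℝ), x ^ n / (x + 1) * Real.exp (-x) := by
      rw [← integral_sub (intPow n) (intFrac n)]
      refine setIntegral_congr_fun measurableSet_Ioi (fun x hx => ?_)
      have hx0 : (0:ℝ) < x := hx
      have hne : x + 1 ≠ 0 := by positivity
      field_simp
      ring
    rw [hsplit, valPow n, ih, Finset.sum_range_succ]
    have hc : ((-1:ℝ)) ^ n * (-1) ^ n = 1 := by
      rw [← pow_add, ← two_mul, pow_mul]; norm_num
    linear_combination (-(Nat.factorial n : ℝ)) * hc
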